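/- Let (R, m) be a Noetherian local ring of prime characteristic p > 0, let a ⊆ R be an ideal, and suppose that a admits a reduction q ⊆ a generated by h elements (i.e. there exists an integer n ≥ 0 with q·aⁿ = aⁿ⁺¹). Then there exists an integer t ≥ 0 such that for all non-negative integers e and ℓ one has the inclusions a^(ℓ·pᵉ + h·(pᵉ−1) + 1 + t) ⊆ (a^(ℓ+1))^[pᵉ] ⊆ a^((ℓ+1)·pᵉ). -/

import Mathlib

open Pointwise

/-- The `e`-th Frobenius power `a^[p^e]` of an ideal `a`: the ideal generated by the
`p^e`-th powers of the elements of `a`. -/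
def frobeniusPower {R : Type*} [CommRing R] (p e : ℕ) (a : Ideal R) : Ideal R :=
  Ideal.span ((fun x => x ^ p ^ e) '' (a : Set R))

private lemma prod_pow_mem_pow_sum {R : Type*} [CommRing R] (q : Ideal R) (s : Finset R)
    (hs : ∀ x ∈ s, x ∈ q) (β : R → ℕ) :
    ∏ x ∈ s, x ^ β x ∈ q ^ (∑ x ∈ s, β x) := by
  classical
  induction s using Finset.induction with
  | empty => simp [Ideal.one_eq_top]
  | @insert x t hx ih =>
      rw [Finset.prod_insert hx, Finset.sum_insert hx, pow_add]
      exact Ideal.mul_mem_mul (Ideal.pow_mem_pow (hs x (Finset.mem_insert_self x t)) _)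
        (ih fun y hy => hs y (Finset.mem_insert_of_mem hy))

private lemma pigeonhole_key {R : Type*} [CommRing R] (s : Finset R) (k m : ℕ) (hk : 1 ≤ k) :
    Ideal.span (s : Set R) ^ (m * k + s.card * (k - 1) + 1) ≤
      Ideal.span ((fun x => x ^ k) '' ((Ideal.span (s : Set R) ^ (m + 1) : Ideal R) : Set R)) := by
  classical
  set q : Ideal R := Ideal.span (s : Set R) with hq
  set N : ℕ := m * k + s.card * (k - 1) + 1 with hN
  rw [hq, show Ideal.span (s : Set R) ^ N = Ideal.span ((s : Set R) ^ N) from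
    Submodule.span_pow _ _, Ideal.span_le]
  intro z hz
  rw [Set.mem_pow] at hz
  obtain ⟨f, hf⟩ := hz
  -- counting
  set c : R → ℕ := fun x => (Finset.univ.filter fun i : Fin N => (f i : R) = x).card with hc
  have hsum : ∑ x ∈ s, c x = N := by
    have := Finset.card_eq_sum_card_fiberwise
      (f := fun i : Fin N => (f i : R)) (s := Finset.univ) (t := s)
      (fun i _ => (f i).2)
    simpa [hc] using this.symm
  set β : R → ℕ := fun x => c x / k with hβ
  have hβsum : m + 1 ≤ ∑ x ∈ s, β x := by
    have h1 : ∀ x, c x ≤ k * β x + (k - 1) := by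
      intro x
      have hd := Nat.div_add_mod (c x) k
      have hmod : c x % k ≤ k - 1 := Nat.le_sub_one_of_lt (Nat.mod_lt _ hk)
      simp only [hβ]
      omega
    have h2 : N ≤ k * (∑ x ∈ s, β x) + s.card * (k - 1) := by
      calc N = ∑ x ∈ s, c x := hsum.symm
        _ ≤ ∑ x ∈ s, (k * β x + (k - 1)) := Finset.sum_le_sum fun x _ => h1 x
        _ = k * (∑ x ∈ s, β x) + s.card * (k - 1) := by
            rw [Finset.sum_add_distrib, Finset.mul_sum, Finset.sum_const, smul_eq_mul]
    have h3 : m * k + 1 ≤ k * (∑ x ∈ s, β x) := by omega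
    have h4 : k * m < k * (∑ x ∈ s, β x) := by rw [mul_comm k m]; omega
    exact Nat.lt_of_mul_lt_mul_left h4
  -- product decomposition
  have hprod : z = ∏ x ∈ s, x ^ c x := by
    rw [← hf, List.prod_ofFn]
    rw [← Finset.prod_fiberwise_of_maps_to (g := fun i : Fin N => (f i : R))
      (t := s) (fun i _ => (f i).2) (fun i => (f i : R))]
    refine Finset.prod_congr rfl fun x _ => ?_
    rw [Finset.prod_congr rfl (fun i hi => (Finset.mem_filter.mp hi).2),
      Finset.prod_const, hc]
  have hdecomp : z = (∏ x ∈ s, x ^ β x) ^ k * ∏ x ∈ s, x ^ (c x % k) := by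
    rw [hprod, ← Finset.prod_pow, ← Finset.prod_mul_distrib]
    refine Finset.prod_congr rfl fun x _ => ?_
    rw [← pow_mul, ← pow_add]
    congr 1
    rw [hβ]
    exact (Nat.div_add_mod' (c x) k).symm ▸ rfl
  -- membership
  have hy : (∏ x ∈ s, x ^ β x) ∈ q ^ (m + 1) := by
    have := prod_pow_mem_pow_sum q s (fun x hx => Ideal.subset_span hx) β
    exact Ideal.pow_le_pow_right hβsum this
  rw [hdecomp]
  exact Ideal.mul_mem_right _ _ (Ideal.subset_span ⟨_, hy, rfl⟩)

/-- Let `(R, m)` be a Noetherian local ring of prime characteristic `p > 0` and let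
`a ⊆ R` be an ideal admitting a reduction `q ⊆ a` generated by `h` elements
(i.e. `q · aⁿ = aⁿ⁺¹` for some `n ≥ 0`). Then there is an integer `t ≥ 0` such that
for all `e, ℓ ≥ 0` we have
`a^(ℓ·pᵉ + h·(pᵉ−1) + 1 + t) ⊆ (a^(ℓ+1))^[pᵉ] ⊆ a^((ℓ+1)·pᵉ)`. -/
theorem exists_pigeonhole_frobeniusPower_of_reduction
    {R : Type*} [CommRing R] [IsNoetherianRing R] [IsLocalRing R]
    (p : ℕ) (hp : p.Prime) [CharP R p]
    (a q : Ideal R) (h : ℕ) (hqa : q ≤ a)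
    (hgen : ∃ s : Finset R, s.card = h ∧ q = Ideal.span (s : Set R))
    (hred : ∃ n : ℕ, q * a ^ n = a ^ (n + 1)) :
    ∃ t : ℕ, ∀ e ℓ : ℕ,
      a ^ (ℓ * p ^ e + h * (p ^ e - 1) + 1 + t) ≤ frobeniusPower p e (a ^ (ℓ + 1)) ∧
      frobeniusPower p e (a ^ (ℓ + 1)) ≤ a ^ ((ℓ + 1) * p ^ e) := by
  obtain ⟨s, hcard, hspan⟩ := hgen
  obtain ⟨n, hn⟩ := hred
  have hred' : ∀ j : ℕ, a ^ (n + j) = q ^ j * a ^ n := by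
    intro j
    induction j with
    | zero => simp
    | succ j ih =>
        calc a ^ (n + (j + 1)) = a ^ (n + j) * a := pow_succ a (n + j)
          _ = q ^ j * a ^ n * a := by rw [ih]
          _ = q ^ j * (q * a ^ n) := by rw [mul_assoc, ← pow_succ, ← hn]
          _ = q ^ (j + 1) * a ^ n := by ring
  refine ⟨n, fun e ℓ => ?_⟩
  have hk : 1 ≤ p ^ e := Nat.one_le_pow _ _ hp.pos
  constructor
  · -- first inclusion
    have key := pigeonhole_key s (p ^ e) ℓ hk
    rw [← hspan, hcard] at key
    have h1 : a ^ (ℓ * p ^ e + h * (p ^ e - 1) + 1 + n)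
        = q ^ (ℓ * p ^ e + h * (p ^ e - 1) + 1) * a ^ n := by
      rw [← hred']; ring_nf
    rw [h1]
    refine le_trans (le_trans Ideal.mul_le_left key) ?_
    unfold frobeniusPower
    refine Ideal.span_mono (Set.image_mono ?_)
    exact_mod_cast Ideal.pow_right_mono hqa (ℓ + 1)
  · -- second inclusion
    rw [frobeniusPower, Ideal.span_le]
    rintro z ⟨y, hy, rfl⟩
    rw [pow_mul]
    exact Ideal.pow_mem_pow hy (p ^ e)
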